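/- arXiv:2605.15552 — 2 statements merged into one kernel-verified Lean document; each statement's English description precedes it below -/
import Mathlib

section
/- Uniqueness of the minimal levelled tree-automaton representation: if two TIDDs $M_1$ and $M_2$ (levelled deterministic bottom-up tree automata over perfect binary assignment trees, satisfying the distinguishability condition that any two distinct states at the same level are separated by the transition function, and with value functions that are injective onto the codomain) compute the same function $g : \{0,1\}^{2^l} \to D$, then at every level $j$ the states of $M_1$ and the states of $M_2$ are in bijection, with corresponding states having equal down-assignment languages (sets of length-$2^j$ strings reaching that state). -/
/-- A levelled deterministic bottom-up tree automaton over perfect binary assignment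
trees: state sets `Q j` for each level, an assignment of each bit to a level-0 state,
and transition functions `δ j : Q j × Q j → Q (j+1)`. -/
structure TIDD where
  Q : ℕ → Type
  ι : Bool → Q 0
  δ : ∀ j, Q j → Q j → Q (j + 1)

/-- The run of a TIDD on a binary string of length `2^j`, by recursive halving. -/
def TIDD.run (M : TIDD) : (j : ℕ) → List Bool → M.Q j
  | 0, w => M.ι (w.headD false)
  | j + 1, w => M.δ j (M.run j (w.take (2 ^ j))) (M.run j (w.drop (2 ^ j)))

/-- The down-assignment language of a state `q` at level `j`: the set of strings of
length `2^j` whose run reaches `q`. -/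
def TIDD.Ldown (M : TIDD) (j : ℕ) (q : M.Q j) : Set (List Bool) :=
  {w | w.length = 2 ^ j ∧ M.run j w = q}

lemma TIDD.run_append (M : TIDD) (j : ℕ) (w u : List Bool) (hw : w.length = 2 ^ j) :
    M.run (j+1) (w ++ u) = M.δ j (M.run j w) (M.run j u) := by
  rw [TIDD.run]
  rw [← hw, List.take_left, List.drop_left]

lemma TIDD.reach (M : TIDD) (l : ℕ) (hι : Function.Surjective M.ι)
    (hδ : ∀ j, j < l → Function.Surjective (fun p : M.Q j × M.Q j => M.δ j p.1 p.2)) :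
    ∀ j, j ≤ l → ∀ q : M.Q j, ∃ w : List Bool, w.length = 2 ^ j ∧ M.run j w = q := by
  intro j
  induction j with
  | zero =>
    intro _ q
    obtain ⟨b, hb⟩ := hι q
    exact ⟨[b], rfl, hb⟩
  | succ j ih =>
    intro hj q
    obtain ⟨⟨q₁, q₂⟩, hq⟩ := hδ j (by omega) q
    obtain ⟨w₁, hw₁, hr₁⟩ := ih (by omega) q₁
    obtain ⟨w₂, hw₂, hr₂⟩ := ih (by omega) q₂
    refine ⟨w₁ ++ w₂, ?_, ?_⟩
    · simp [hw₁, hw₂, pow_succ]; ring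
    · rw [TIDD.run_append M j w₁ w₂ hw₁, hr₁, hr₂]; exact hq

/-- Uniqueness of the minimal levelled tree-automaton representation: if two TIDDs
(with all states arising from the construction, satisfying the distinguishability
condition, and with injective value maps) compute the same function
`g : {0,1}^{2^l} → D`, then at every level `j ≤ l` their state sets are in bijection,
with corresponding states having equal down-assignment languages. -/
theorem tidd_canonicity {D : Type*} (l : ℕ) (M₁ M₂ : TIDD)
    (V₁ : M₁.Q l → D) (V₂ : M₂.Q l → D)
    (hV₁ : Function.Injective V₁) (hV₂ : Function.Injective V₂)
    -- every state arises from the construction (conditions 2(ii),(iii) of the TIDD def)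
    (hι₁ : Function.Surjective M₁.ι) (hι₂ : Function.Surjective M₂.ι)
    (hδ₁ : ∀ j, j < l → Function.Surjective (fun p : M₁.Q j × M₁.Q j => M₁.δ j p.1 p.2))
    (hδ₂ : ∀ j, j < l → Function.Surjective (fun p : M₂.Q j × M₂.Q j => M₂.δ j p.1 p.2))
    -- distinguishability
    (hd₁ : ∀ j, j < l → ∀ q q' : M₁.Q j, q ≠ q' →
      ∃ p : M₁.Q j, M₁.δ j q p ≠ M₁.δ j q' p ∨ M₁.δ j p q ≠ M₁.δ j p q')
    (hd₂ : ∀ j, j < l → ∀ q q' : M₂.Q j, q ≠ q' →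
      ∃ p : M₂.Q j, M₂.δ j q p ≠ M₂.δ j q' p ∨ M₂.δ j p q ≠ M₂.δ j p q')
    -- the two TIDDs compute the same function
    (hsame : ∀ w : List Bool, w.length = 2 ^ l → V₁ (M₁.run l w) = V₂ (M₂.run l w)) :
    ∀ j, j ≤ l → ∃ e : M₁.Q j ≃ M₂.Q j,
      ∀ q : M₁.Q j, M₁.Ldown j q = M₂.Ldown j (e q) := by
  have reach₁ := TIDD.reach M₁ l hι₁ hδ₁
  have reach₂ := TIDD.reach M₂ l hι₂ hδ₂
  have key : ∀ d j, j + d = l → ∀ w w' : List Bool, w.length = 2 ^ j →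
      w'.length = 2 ^ j → (M₁.run j w = M₁.run j w' ↔ M₂.run j w = M₂.run j w') := by
    intro d
    induction d with
    | zero =>
      intro j hj w w' hw hw'
      have hjl : j = l := by omega
      subst hjl
      constructor
      · intro h
        apply hV₂
        rw [← hsame w hw, ← hsame w' hw', h]
      · intro h
        apply hV₁
        rw [hsame w hw, hsame w' hw', h]
    | succ d ih =>
      intro j hj w w' hw hw'
      have hjl : j < l := by omega
      have ih' := ih (j + 1) (by omega)
      have hlen : ∀ u v : List Bool, u.length = 2 ^ j → v.length = 2 ^ j →
          (u ++ v).length = 2 ^ (j + 1) := by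
        intro u v hu hv
        simp [hu, hv, pow_succ]; ring
      constructor
      · intro h
        by_contra hne
        obtain ⟨p, hp⟩ := hd₂ j hjl _ _ hne
        obtain ⟨u, hu, hru⟩ := reach₂ j (le_of_lt hjl) p
        rcases hp with hp | hp
        · have h1 : M₁.run (j+1) (w ++ u) = M₁.run (j+1) (w' ++ u) := by
            rw [M₁.run_append j w u hw, M₁.run_append j w' u hw', h]
          have h2 := (ih' (w ++ u) (w' ++ u) (hlen w u hw hu) (hlen w' u hw' hu)).mp h1
          rw [M₂.run_append j w u hw, M₂.run_append j w' u hw', hru] at h2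
          exact hp h2
        · have h1 : M₁.run (j+1) (u ++ w) = M₁.run (j+1) (u ++ w') := by
            rw [M₁.run_append j u w hu, M₁.run_append j u w' hu, h]
          have h2 := (ih' (u ++ w) (u ++ w') (hlen u w hu hw) (hlen u w' hu hw')).mp h1
          rw [M₂.run_append j u w hu, M₂.run_append j u w' hu, hru] at h2
          exact hp h2
      · intro h
        by_contra hne
        obtain ⟨p, hp⟩ := hd₁ j hjl _ _ hne
        obtain ⟨u, hu, hru⟩ := reach₁ j (le_of_lt hjl) p
        rcases hp with hp | hp
        · have h1 : M₂.run (j+1) (w ++ u) = M₂.run (j+1) (w' ++ u) := by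
            rw [M₂.run_append j w u hw, M₂.run_append j w' u hw', h]
          have h2 := (ih' (w ++ u) (w' ++ u) (hlen w u hw hu) (hlen w' u hw' hu)).mpr h1
          rw [M₁.run_append j w u hw, M₁.run_append j w' u hw', hru] at h2
          exact hp h2
        · have h1 : M₂.run (j+1) (u ++ w) = M₂.run (j+1) (u ++ w') := by
            rw [M₂.run_append j u w hu, M₂.run_append j u w' hu, h]
          have h2 := (ih' (u ++ w) (u ++ w') (hlen u w hu hw) (hlen u w' hu hw')).mpr h1
          rw [M₁.run_append j u w hu, M₁.run_append j u w' hu, hru] at h2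
          exact hp h2
  intro j hj
  have P := key (l - j) j (by omega)
  choose wit₁ hlen₁ hrun₁ using reach₁ j hj
  choose wit₂ hlen₂ hrun₂ using reach₂ j hj
  refine ⟨⟨fun q => M₂.run j (wit₁ q), fun r => M₁.run j (wit₂ r), ?_, ?_⟩, ?_⟩
  · intro q
    have : M₂.run j (wit₂ (M₂.run j (wit₁ q))) = M₂.run j (wit₁ q) := hrun₂ _
    have := (P _ _ (hlen₂ _) (hlen₁ _)).mpr this
    rw [hrun₁] at this
    exact this
  · intro r
    have : M₁.run j (wit₁ (M₁.run j (wit₂ r))) = M₁.run j (wit₂ r) := hrun₁ _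
    have := (P _ _ (hlen₁ _) (hlen₂ _)).mp this
    rw [hrun₂] at this
    exact this
  · intro q
    ext w
    simp only [TIDD.Ldown, Set.mem_setOf_eq, Equiv.coe_fn_mk]
    constructor
    · rintro ⟨hwl, hwr⟩
      refine ⟨hwl, ?_⟩
      have : M₁.run j w = M₁.run j (wit₁ q) := by rw [hwr, hrun₁]
      exact (P _ _ hwl (hlen₁ _)).mp this
    · rintro ⟨hwl, hwr⟩
      refine ⟨hwl, ?_⟩
      have := (P _ _ hwl (hlen₁ q)).mpr hwr
      rw [hrun₁] at this
      exact this
end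

section
/- Lower bound on TIDD size for the anti-diagonal function: let $n = 2^m$ and define $h_n : \{0,1\}^{n^2} \to \{0,1\}$ by $h_n(x) = 1$ iff for every $i \in \{0,\ldots,n-1\}$, the bit $x_{i \cdot n + (n-1-i)} = 0$. Then any TIDD computing $h_n$ under the variable ordering $x_0, \ldots, x_{n^2-1}$ has at least $2^n$ states at level $m = \log_2 n$ (the level corresponding to blocks of length $n$). -/
lemma run_take (M : TIDD) : ∀ (j : ℕ) (w : List Bool), M.run j (w.take (2 ^ j)) = M.run j w
  | 0, w => by cases w <;> rfl
  | j + 1, w => by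
    simp only [TIDD.run]
    rw [List.take_take, min_eq_left (Nat.pow_le_pow_right (by norm_num) (Nat.le_succ j)),
      show (2:ℕ)^(j+1) = 2^j + 2^j by ring, List.drop_take, Nat.add_sub_cancel, run_take M j,
      ← run_take M j (List.drop (2^j) w)]

lemma run_take_ge (M : TIDD) (j s : ℕ) (h : 2 ^ j ≤ s) (w : List Bool) :
    M.run j (w.take s) = M.run j w := by
  rw [← run_take M j (w.take s), List.take_take, min_eq_left h, run_take M j]

lemma run_append (M : TIDD) (j : ℕ) (a b : List Bool) (ha : a.length = 2 ^ j) :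
    M.run j (a ++ b) = M.run j a := by
  rw [← run_take M j (a ++ b), List.take_append_of_le_length (by omega), run_take_ge M j _ (by omega)]

lemma run_blocks (M : TIDD) (m : ℕ) : ∀ (k : ℕ) (w w' : List Bool),
    (∀ t < 2 ^ k, M.run m (w.drop (t * 2 ^ m)) = M.run m (w'.drop (t * 2 ^ m))) →
    M.run (m + k) w = M.run (m + k) w'
  | 0, w, w', h => by simpa using h 0 (by norm_num)
  | k + 1, w, w', h => by
    show M.run (m + k + 1) w = M.run (m + k + 1) w'
    simp only [TIDD.run]
    congr 1
    · apply run_blocks M m k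
      intro t ht
      have h1 : t * 2 ^ m + 2 ^ m ≤ 2 ^ (m + k) := by
        calc t * 2 ^ m + 2 ^ m = (t + 1) * 2 ^ m := by ring
          _ ≤ 2 ^ k * 2 ^ m := Nat.mul_le_mul_right _ ht
          _ = 2 ^ (m + k) := by rw [pow_add]; ring
      rw [List.drop_take, run_take_ge M m _ (by omega), List.drop_take,
        run_take_ge M m _ (by omega)]
      exact h t (lt_of_lt_of_le ht (Nat.pow_le_pow_right (by norm_num) (Nat.le_succ k)))
    · apply run_blocks M m k
      intro t ht
      rw [List.drop_drop, List.drop_drop]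
      have : 2 ^ (m + k) + t * 2 ^ m = (t + 2 ^ k) * 2 ^ m := by rw [pow_add]; ring
      rw [this]
      exact h (t + 2 ^ k) (by rw [pow_succ]; omega)

lemma join_getD (n : ℕ) : ∀ (L : List (List Bool)) (t j : ℕ), j < n →
    (∀ r ∈ L, r.length = n) →
    L.flatten.getD (t * n + j) false = (L.getD t []).getD j false
  | [], t, j, hj, hL => by simp
  | r :: L, 0, j, hj, hL => by
    have hr : r.length = n := hL r (by simp)
    simp only [List.flatten_cons, Nat.zero_mul, Nat.zero_add, List.getD_cons_zero]
    rw [List.getD_append _ _ _ _ (by omega)]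
  | r :: L, t + 1, j, hj, hL => by
    have hr : r.length = n := hL r (by simp)
    have : (t + 1) * n + j = r.length + (t * n + j) := by rw [hr]; ring
    simp only [List.flatten_cons, this]
    rw [List.getD_append_right _ _ _ _ (by omega)]
    simp only [Nat.add_sub_cancel_left]
    have := join_getD n L t j hj (fun s hs => hL s (by simp [hs]))
    simpa using this

lemma join_drop (n : ℕ) : ∀ (L : List (List Bool)) (t : ℕ),
    (∀ r ∈ L, r.length = n) → L.flatten.drop (t * n) = (L.drop t).flatten
  | L, 0, hL => by simp
  | [], t + 1, hL => by simp
  | r :: L, t + 1, hL => by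
    have hr : r.length = n := hL r (by simp)
    have : (t + 1) * n = r.length + t * n := by rw [hr]; ring
    simp only [List.flatten_cons, this, List.drop_length_add_append]
    exact join_drop n L t (fun s hs => hL s (by simp [hs]))


/-- The anti-diagonal function `h_n` on row-major flattenings of `n × n` Boolean
matrices: `h_n x = 1` iff `x_{i·n + (n-1-i)} = 0` for all `0 ≤ i < n`. -/
def antiDiag (n : ℕ) (x : List Bool) : Bool :=
  decide (∀ i < n, x.getD (i * n + (n - 1 - i)) false = false)

/-- Lower bound on TIDD size for the anti-diagonal function: with `n = 2^m`, any TIDD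
computing `h_n` under the variable ordering `x_0, …, x_{n²-1}` has at least `2^n`
states at level `m` (the level of blocks of length `n`). -/
theorem tidd_antidiag_lower_bound (m : ℕ) (M : TIDD) [∀ j, Fintype (M.Q j)]
    (V : M.Q (2 * m) → Bool) (hV : Function.Injective V)
    (hcomputes : ∀ x : List Bool, x.length = 2 ^ m * 2 ^ m →
      V (M.run (2 * m) x) = antiDiag (2 ^ m) x) :
    2 ^ (2 ^ m) ≤ Fintype.card (M.Q m) := by
  set n := 2 ^ m with hn
  have hn1 : 1 ≤ n := Nat.one_le_two_pow
  have hf : Function.Injective (fun u : Fin n → Bool => M.run m (List.ofFn u)) := by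
    intro u v huv
    simp only at huv
    funext p
    -- the row index whose anti-diagonal entry is position p
    set i := n - 1 - p.val with hi
    have hpi : n - 1 - i = p.val := by have := p.isLt; omega
    have hilt : i < n := by have := p.isLt; omega
    -- the test matrix
    set row : (Fin n → Bool) → ℕ → List Bool :=
      fun w t => if t = i then List.ofFn w else List.replicate n false with hrow
    set X : (Fin n → Bool) → List Bool :=
      fun w => ((List.range n).map (row w)).flatten with hX
    have hrlen : ∀ w, ∀ r ∈ (List.range n).map (row w), r.length = n := by
      intro w r hr
      simp only [List.mem_map, List.mem_range] at hr
      obtain ⟨t, _, rfl⟩ := hr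
      by_cases h : t = i <;> simp [hrow, h]
    have hXlen : ∀ w, (X w).length = n * n := by
      intro w
      rw [hX, List.length_flatten, List.map_map]
      have : (List.range n).map (List.length ∘ row w) = List.replicate n n := by
        have := List.eq_replicate_of_mem (l := (List.range n).map (List.length ∘ row w))
          (a := n) (by
            intro b hb
            simp only [List.mem_map, List.mem_range, Function.comp] at hb
            obtain ⟨t, _, rfl⟩ := hb
            by_cases h : t = i <;> simp [hrow, h])
        simpa using this
      rw [this, List.sum_replicate, smul_eq_mul]
    have hblock : ∀ w, ∀ t, t < n →
        M.run m ((X w).drop (t * n)) = M.run m (row w t) := by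
      intro w t ht
      rw [hX, join_drop n _ t (hrlen w),
        List.drop_eq_getElem_cons (by simpa using ht), List.flatten_cons,
        List.getElem_map, List.getElem_range]
      apply run_append
      by_cases h : t = i <;> simp [hrow, h, hn]
    have hXrun : M.run (2 * m) (X u) = M.run (2 * m) (X v) := by
      rw [two_mul]
      apply run_blocks M m m
      intro t ht
      rw [← hn] at ht
      rw [← hn, hblock u t ht, hblock v t ht]
      by_cases h : t = i
      · simp only [hrow, h, if_pos rfl]
        exact huv
      · simp [hrow, h]
    have hAD : antiDiag n (X u) = antiDiag n (X v) := by
      rw [hn, ← hcomputes (X u) (by rw [hXlen, hn]), ← hcomputes (X v) (by rw [hXlen, hn]), hXrun]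
    have hentry : ∀ w t, t < n → (X w).getD (t * n + (n - 1 - t)) false =
        (row w t).getD (n - 1 - t) false := by
      intro w t ht
      rw [hX, join_getD n _ t _ (by omega) (hrlen w)]
      congr 1
      rw [List.getD_eq_getElem _ _ (by simp [ht])]
      simp [ht]
    have hval : ∀ w : Fin n → Bool, antiDiag n (X w) = decide (w p = false) := by
      intro w
      unfold antiDiag
      rw [decide_eq_decide]
      constructor
      · intro h
        have := h i hilt
        rw [hentry w i hilt] at this
        simp only [hrow, if_pos rfl] at this
        rw [hpi] at this
        rwa [List.getD_eq_getElem _ _ (by simp [p.isLt]), List.getElem_ofFn] at this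
      · intro h t ht
        rw [hentry w t ht]
        by_cases hti : t = i
        · subst hti
          simp only [hrow, if_pos rfl, hpi]
          rwa [List.getD_eq_getElem _ _ (by simp [p.isLt]), List.getElem_ofFn]
        · simp only [hrow, if_neg hti]
          rcases Nat.lt_or_ge (n - 1 - t) n with hb | hb
          · rw [List.getD_eq_getElem _ _ (by simpa using hb)]
            simp
          · rw [List.getD_eq_default _ _ (by simpa using hb)]
    rw [hval u, hval v] at hAD
    have := decide_eq_decide.mp hAD
    cases h1 : u p <;> cases h2 : v p <;> simp_all
  calc 2 ^ n = Fintype.card (Fin n → Bool) := by simp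
    _ ≤ Fintype.card (M.Q m) := Fintype.card_le_of_injective _ hf
end
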